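/- Let S be an (n+m)×(n+m) column-stochastic matrix in block form S = [[S₀, B],[0,0]] where the last m rows are zero (nodes n+1,…,n+m have no incoming edges), α ∈ [0,1), and u a probability vector. Let v be the PageRank of S w.r.t. u. Define ů₀ = u₀ + α Σ_{i=1}^m u_{n+i} B_{·,i} (where B_{·,i} is the i-th column of the n×m block B). Then v₀ = (1-α) Σ_{x=0}^∞ α^x S₀^x ů₀, and |v₀| = |ů₀| = 1 - (1-α) Σ_{i=1}^m u_{n+i}. -/

import Mathlib

theorem multi_contraction_identity (n m : ℕ) (S0 : Matrix (Fin n) (Fin n) ℝ)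
    (B : Matrix (Fin n) (Fin m) ℝ)
    (S : Matrix (Fin n ⊕ Fin m) (Fin n ⊕ Fin m) ℝ)
    (hS : S = Matrix.fromBlocks S0 B 0 0)
    (hSnn : ∀ i j, 0 ≤ S i j) (hScol : ∀ j, ∑ i, S i j = 1)
    (α : ℝ) (hα0 : 0 ≤ α) (hα1 : α < 1)
    (u : Fin n ⊕ Fin m → ℝ) (hu0 : ∀ i, 0 ≤ u i) (hu1 : ∑ i, u i = 1)
    (v : Fin n ⊕ Fin m → ℝ) (hv : v = α • S.mulVec v + (1 - α) • u)
    (uadj : Fin n → ℝ)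
    (huadj : uadj = fun i => u (Sum.inl i) + α * ∑ j : Fin m, u (Sum.inr j) * B i j) :
    (fun i => v (Sum.inl i)) = (1 - α) • ∑' x : ℕ, α ^ x • (S0 ^ x).mulVec uadj ∧
      ∑ i, v (Sum.inl i) = ∑ i, uadj i ∧
      ∑ i, uadj i = 1 - (1 - α) * ∑ j : Fin m, u (Sum.inr j) := by
  set f : Fin n → ℝ := fun i => v (Sum.inl i) with hf
  -- basic facts about S entries
  have hS0nn : ∀ i j, 0 ≤ S0 i j := by
    intro i j; have := hSnn (Sum.inl i) (Sum.inl j); rwa [hS] at this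
  have hSrow : ∀ (j : Fin m) (k : Fin n ⊕ Fin m), S (Sum.inr j) k = 0 := by
    intro j k; rw [hS]; cases k <;> simp [Matrix.fromBlocks]
  have hS0col : ∀ j, ∑ i, S0 i j = 1 := by
    intro j
    have h := hScol (Sum.inl j)
    rw [Fintype.sum_sum_type] at h
    simp only [hSrow, Finset.sum_const_zero, add_zero] at h
    rw [hS] at h; simpa using h
  have hBcol : ∀ j, ∑ i, B i j = 1 := by
    intro j
    have h := hScol (Sum.inr j)
    rw [Fintype.sum_sum_type] at h
    simp only [hSrow, Finset.sum_const_zero, add_zero] at h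
    rw [hS] at h; simpa using h
  -- bottom entries of v
  have hvbot : ∀ j, v (Sum.inr j) = (1 - α) * u (Sum.inr j) := by
    intro j
    have h := congrFun hv (Sum.inr j)
    simp [Matrix.mulVec, dotProduct, hSrow] at h
    simpa using h
  -- key fixed point equation for f
  have hkey : ∀ i, f i = α * (S0.mulVec f) i + (1 - α) * uadj i := by
    intro i
    have h := congrFun hv (Sum.inl i)
    have hmv : (S.mulVec v) (Sum.inl i)
        = (S0.mulVec f) i + ∑ j, B i j * ((1 - α) * u (Sum.inr j)) := by
      rw [Matrix.mulVec, dotProduct, Fintype.sum_sum_type, hS]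
      simp only [Matrix.fromBlocks_apply₁₁, Matrix.fromBlocks_apply₁₂]
      have h1 : ∑ j, S0 i j * v (Sum.inl j) = (S0.mulVec f) i := by
        simp [Matrix.mulVec, dotProduct, hf]
      have h2 : ∑ j, B i j * v (Sum.inr j)
          = ∑ j, B i j * ((1 - α) * u (Sum.inr j)) :=
        Finset.sum_congr rfl fun j _ => by rw [hvbot j]
      rw [h1, h2]
    simp only [Pi.add_apply, Pi.smul_apply, smul_eq_mul] at h
    rw [hmv] at h
    rw [huadj]
    show v (Sum.inl i) = α * S0.mulVec f i
      + (1 - α) * (u (Sum.inl i) + α * ∑ j : Fin m, u (Sum.inr j) * B i j)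
    rw [h]
    have h3 : ∑ j, B i j * ((1 - α) * u (Sum.inr j))
        = (1 - α) * ∑ j, u (Sum.inr j) * B i j := by
      rw [Finset.mul_sum]
      exact Finset.sum_congr rfl fun j _ => by ring
    rw [mul_add, h3]
    ring
  have hkeyf : f = α • S0.mulVec f + (1 - α) • uadj := by
    funext i; simpa using hkey i
  -- properties of powers of S0
  have hpow : ∀ x : ℕ, (∀ i j, 0 ≤ (S0 ^ x) i j) ∧ (∀ j, ∑ i, (S0 ^ x) i j = 1) := by
    intro x
    induction x with
    | zero =>
      constructor
      · intro i j; simp [Matrix.one_apply]; split <;> norm_num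
      · intro j; simp [Matrix.one_apply]
    | succ x ih =>
      obtain ⟨ihnn, ihcol⟩ := ih
      have hmul : S0 ^ (x + 1) = S0 ^ x * S0 := pow_succ S0 x
      constructor
      · intro i j
        rw [hmul, Matrix.mul_apply]
        exact Finset.sum_nonneg fun k _ => mul_nonneg (ihnn i k) (hS0nn k j)
      · intro j
        rw [hmul]
        simp only [Matrix.mul_apply]
        rw [Finset.sum_comm]
        calc ∑ k, ∑ i, (S0 ^ x) i k * S0 k j
            = ∑ k, (∑ i, (S0 ^ x) i k) * S0 k j := by
              refine Finset.sum_congr rfl fun k _ => ?_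
              rw [Finset.sum_mul]
          _ = ∑ k, S0 k j := by
              refine Finset.sum_congr rfl fun k _ => ?_
              rw [ihcol k, one_mul]
          _ = 1 := hS0col j
  have hentry : ∀ (x : ℕ) (i j : Fin n), (S0 ^ x) i j ≤ 1 := by
    intro x i j
    have := (hpow x).2 j
    calc (S0 ^ x) i j ≤ ∑ k, (S0 ^ x) k j :=
          Finset.single_le_sum (fun k _ => (hpow x).1 k j) (Finset.mem_univ i)
      _ = 1 := this
  -- entrywise bound on powers applied to a vector
  have hbound : ∀ (x : ℕ) (w : Fin n → ℝ) (i : Fin n),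
      |((S0 ^ x).mulVec w) i| ≤ ∑ k, |w k| := by
    intro x w i
    rw [Matrix.mulVec, dotProduct]
    calc |∑ k, (S0 ^ x) i k * w k| ≤ ∑ k, |(S0 ^ x) i k * w k| :=
          Finset.abs_sum_le_sum_abs _ _
      _ ≤ ∑ k, |w k| := by
          refine Finset.sum_le_sum fun k _ => ?_
          rw [abs_mul, abs_of_nonneg ((hpow x).1 i k)]
          exact mul_le_of_le_one_left (abs_nonneg _) (hentry x i k)
  -- summability
  have hsum : Summable (fun x : ℕ => α ^ x • (S0 ^ x).mulVec uadj) := by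
    rw [Pi.summable]
    intro i
    have hgeo : Summable (fun x : ℕ => α ^ x * (∑ k, |uadj k|)) :=
      (summable_geometric_of_lt_one hα0 hα1).mul_right _
    refine Summable.of_norm_bounded hgeo fun x => ?_
    simp only [Pi.smul_apply, smul_eq_mul, Real.norm_eq_abs, abs_mul,
      abs_pow, abs_of_nonneg hα0]
    exact mul_le_mul_of_nonneg_left (hbound x uadj i) (pow_nonneg hα0 x)
  -- partial sum identity
  have hpart : ∀ N : ℕ, f = (1 - α) • (∑ x ∈ Finset.range N, α ^ x • (S0 ^ x).mulVec uadj)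
      + α ^ N • (S0 ^ N).mulVec f := by
    intro N
    induction N with
    | zero => simp
    | succ N ih =>
      rw [Finset.sum_range_succ, smul_add]
      have hstep : (α ^ N • (S0 ^ N).mulVec f : Fin n → ℝ)
          = (1 - α) • α ^ N • (S0 ^ N).mulVec uadj
            + α ^ (N + 1) • (S0 ^ (N + 1)).mulVec f := by
        conv_lhs => rw [hkeyf]
        rw [Matrix.mulVec_add, Matrix.mulVec_smul, Matrix.mulVec_smul, smul_add]
        rw [Matrix.mulVec_mulVec, ← pow_succ]
        rw [smul_comm ((1:ℝ) - α) (α ^ N), smul_smul (α ^ N) α, ← pow_succ]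
        exact add_comm _ _
      calc f = (1 - α) • (∑ x ∈ Finset.range N, α ^ x • (S0 ^ x).mulVec uadj)
            + α ^ N • (S0 ^ N).mulVec f := ih
        _ = _ := by rw [hstep, smul_comm ((1:ℝ) - α) (α ^ N)]; abel
  -- the remainder tends to zero
  have htend : Filter.Tendsto (fun N => α ^ N • (S0 ^ N).mulVec f)
      Filter.atTop (nhds 0) := by
    rw [tendsto_pi_nhds]
    intro i
    have hg : Filter.Tendsto (fun N : ℕ => (∑ k, |f k|) * α ^ N)
        Filter.atTop (nhds 0) := by
      simpa using (tendsto_pow_atTop_nhds_zero_of_lt_one hα0 hα1).const_mul (∑ k, |f k|)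
    refine squeeze_zero_norm (fun N => ?_) hg
    simp only [Pi.smul_apply, smul_eq_mul, Real.norm_eq_abs, abs_mul,
      abs_pow, abs_of_nonneg hα0]
    rw [mul_comm]
    exact mul_le_mul_of_nonneg_right (hbound N f i) (pow_nonneg hα0 N)
  -- conclude main identity
  have hmain : f = (1 - α) • ∑' x : ℕ, α ^ x • (S0 ^ x).mulVec uadj := by
    have h1 : Filter.Tendsto
        (fun N => (1 - α) • ∑ x ∈ Finset.range N, α ^ x • (S0 ^ x).mulVec uadj)
        Filter.atTop (nhds ((1 - α) • ∑' x : ℕ, α ^ x • (S0 ^ x).mulVec uadj)) :=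
      (hsum.hasSum.tendsto_sum_nat).const_smul _
    have h2 : Filter.Tendsto
        (fun N => (1 - α) • ∑ x ∈ Finset.range N, α ^ x • (S0 ^ x).mulVec uadj)
        Filter.atTop (nhds f) := by
      have heq : (fun N => (1 - α) • ∑ x ∈ Finset.range N, α ^ x • (S0 ^ x).mulVec uadj)
          = fun N => f - α ^ N • (S0 ^ N).mulVec f :=
        funext fun N => eq_sub_of_add_eq (hpart N).symm
      rw [heq]
      have hc : Filter.Tendsto (fun _ : ℕ => f) Filter.atTop (nhds f) :=
        tendsto_const_nhds
      simpa using hc.sub htend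
    exact tendsto_nhds_unique h2 h1
  -- sum identities
  have hmvsum : ∑ i, (S0.mulVec f) i = ∑ i, f i := by
    simp only [Matrix.mulVec, dotProduct]
    rw [Finset.sum_comm]
    refine Finset.sum_congr rfl fun j _ => ?_
    rw [← Finset.sum_mul, hS0col j, one_mul]
  have hsumeq : ∑ i, f i = ∑ i, uadj i := by
    have h := Finset.sum_congr rfl (fun i (_ : i ∈ Finset.univ) => hkey i)
    rw [Finset.sum_add_distrib, ← Finset.mul_sum, ← Finset.mul_sum, hmvsum] at h
    have hne : (1 - α) ≠ 0 := by linarith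
    have : (1 - α) * ∑ i, f i = (1 - α) * ∑ i, uadj i := by linarith
    exact mul_left_cancel₀ hne this
  have huadjsum : ∑ i, uadj i = 1 - (1 - α) * ∑ j, u (Sum.inr j) := by
    rw [huadj]
    rw [Finset.sum_add_distrib, ← Finset.mul_sum]
    have hswap : ∑ i, ∑ j, u (Sum.inr j) * B i j
        = ∑ j, u (Sum.inr j) := by
      rw [Finset.sum_comm]
      refine Finset.sum_congr rfl fun j _ => ?_
      rw [← Finset.mul_sum, hBcol j, mul_one]
    rw [hswap]
    have hsplit : ∑ i, u (Sum.inl i) + ∑ j, u (Sum.inr j) = 1 := by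
      rw [← Fintype.sum_sum_type]; exact hu1
    linarith
  exact ⟨hmain, hsumeq, huadjsum⟩
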